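/- Consider a jointly-convex GNEP in which player ν solves min_{x^ν} θ_ν(x) s.t. g(x) ≤ 0 and h(x) ≤ 0, where g : ℝ^n → ℝ^m and h : ℝ^n → ℝ^p have convex continuously differentiable components. Let (x^k) be generated by the variational-equilibrium augmented Lagrangian method (Algorithm 5.1) under Assumption 5.1 with (ε_k) bounded and ε'_k → 0, let x̄ be a limit point of (x^k), and assume that h satisfies the classical CPLD condition at x̄. Then x̄ is a global solution of the convex optimization problem min_x ‖g_+(x)‖² s.t. h(x) ≤ 0; in particular, if the GNEP has feasible points, then x̄ is feasible. -/

import Mathlib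

open Filter Topology Finset Function RealInnerProductSpace

/-- The strategy space of a GNEP: one Euclidean block per player. -/
abbrev Strat {N : ℕ} (n : Fin N → ℕ) := (ν : Fin N) → EuclideanSpace ℝ (Fin (n ν))

/-- Partial gradient of `f : Strat n → ℝ` with respect to player `ν`'s block at `x`. -/
noncomputable def pgrad {N : ℕ} {n : Fin N → ℕ} (ν : Fin N)
    (f : Strat n → ℝ) (x : Strat n) : EuclideanSpace ℝ (Fin (n ν)) :=
  gradient (fun z => f (Function.update x ν z)) (x ν)

/-- Positive linear dependence of a family on a finite index set. -/
def PosLinDep {ι E : Type*} [AddCommGroup E] [Module ℝ E]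
    (s : Finset ι) (v : ι → E) : Prop :=
  ∃ a : ι → ℝ, (∀ i, 0 ≤ a i) ∧ (∃ i ∈ s, a i ≠ 0) ∧ ∑ i ∈ s, a i • v i = 0

/-- Linear dependence of a family on a finite index set. -/
def LinDep {ι E : Type*} [AddCommGroup E] [Module ℝ E]
    (s : Finset ι) (v : ι → E) : Prop :=
  ∃ a : ι → ℝ, (∃ i ∈ s, a i ≠ 0) ∧ ∑ i ∈ s, a i • v i = 0

/-- CPLD with respect to player `ν`. -/
def CPLDnu {N : ℕ} {n : Fin N → ℕ} {ι : Type*} (ν : Fin N)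
    (c : ι → Strat n → ℝ) (x : Strat n) : Prop :=
  ∀ I : Finset ι, (∀ i ∈ I, c i x = 0) →
    PosLinDep I (fun i => pgrad ν (c i) x) →
    ∃ U ∈ 𝓝 x, ∀ y ∈ U, LinDep I (fun i => pgrad ν (c i) y)

/-- EMFCQ with respect to player `ν`. -/
def EMFCQnu {N : ℕ} {n : Fin N → ℕ} {ι : Type*} (ν : Fin N)
    (c : ι → Strat n → ℝ) (x : Strat n) : Prop :=
  ∃ d : EuclideanSpace ℝ (Fin (n ν)), ∀ i, 0 ≤ c i x → inner (𝕜 := ℝ) (pgrad ν (c i) x) d < 0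

/-! ### Auxiliary lemmas -/

section Aux

variable {N : ℕ} {n : Fin N → ℕ}

/-- The continuous linear inclusion of player `ν`'s block into the strategy space. -/
noncomputable def sCLM (ν : Fin N) : EuclideanSpace ℝ (Fin (n ν)) →L[ℝ] Strat n :=
  ContinuousLinearMap.pi (Pi.single ν (ContinuousLinearMap.id ℝ _))

lemma sCLM_apply (ν : Fin N) (v : EuclideanSpace ℝ (Fin (n ν))) :
    sCLM ν v = Pi.single ν v := by
  funext μ
  rcases eq_or_ne μ ν with rfl | hμ
  · simp [sCLM]
  · simp [sCLM, Pi.single_eq_of_ne hμ]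

lemma hasFDerivAt_update' {c : Strat n → ℝ} {x : Strat n} {D : Strat n →L[ℝ] ℝ}
    (hc : HasFDerivAt c D x) (ν : Fin N) :
    HasFDerivAt (fun z => c (Function.update x ν z)) (D.comp (sCLM ν)) (x ν) := by
  have h2 : HasFDerivAt c D (Function.update x ν (x ν)) := by
    rwa [Function.update_eq_self]
  exact h2.comp (x ν) (hasFDerivAt_update x (x ν))

lemma pgrad_eq {c : Strat n → ℝ} {x : Strat n} (hc : DifferentiableAt ℝ c x) (ν : Fin N) :
    pgrad ν c x
      = (InnerProductSpace.toDual ℝ _).symm ((fderiv ℝ c x).comp (sCLM ν)) := by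
  rw [pgrad, gradient, (hasFDerivAt_update' hc.hasFDerivAt ν).fderiv]

lemma pgrad_inner {c : Strat n → ℝ} {x : Strat n} (hc : DifferentiableAt ℝ c x) (ν : Fin N)
    (v : EuclideanSpace ℝ (Fin (n ν))) :
    inner (𝕜 := ℝ) (pgrad ν c x) v = fderiv ℝ c x (Pi.single ν v) := by
  rw [pgrad_eq hc, InnerProductSpace.toDual_symm_apply, ContinuousLinearMap.comp_apply, sCLM_apply]

lemma pgrad_continuous {c : Strat n → ℝ} (hc : ContDiff ℝ 1 c) (ν : Fin N) :
    Continuous (fun x => pgrad ν c x) := by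
  have : (fun x => pgrad ν c x)
      = fun x => (InnerProductSpace.toDual ℝ _).symm ((fderiv ℝ c x).comp (sCLM ν)) := by
    funext x; exact pgrad_eq (hc.differentiable one_ne_zero x) ν
  rw [this]
  exact (InnerProductSpace.toDual ℝ _).symm.continuous.comp
    ((hc.continuous_fderiv one_ne_zero).clm_comp continuous_const)

lemma fderiv_le_sub_of_convex {c : Strat n → ℝ} (hc : ContDiff ℝ 1 c)
    (hconv : ConvexOn ℝ Set.univ c) (x y : Strat n) :
    fderiv ℝ c x (y - x) ≤ c y - c x := by
  set φ : ℝ → ℝ := fun t => c (AffineMap.lineMap x y t) with hφdef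
  have hline : ∀ t : ℝ, (AffineMap.lineMap x y t : Strat n) = x + t • (y - x) := by
    intro t; rw [AffineMap.lineMap_apply_module']; abel
  have hφconv : ConvexOn ℝ Set.univ φ := by
    have := hconv.comp_affineMap (AffineMap.lineMap x y)
    exact this
  have hφd : HasDerivAt φ (fderiv ℝ c x (y - x)) 0 := by
    have hl : HasDerivAt (fun t : ℝ => x + t • (y - x)) (y - x) 0 := by
      simpa using ((hasDerivAt_id (0:ℝ)).smul_const (y - x)).const_add x
    have hcd : HasFDerivAt c (fderiv ℝ c x) (x + (0:ℝ) • (y - x)) := by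
      simpa using (hc.differentiable one_ne_zero x).hasFDerivAt
    have := hcd.comp_hasDerivAt 0 hl
    simpa [hφdef, hline, Function.comp_def] using this
  have h01 := hφconv.le_slope_of_hasDerivAt (Set.mem_univ (0:ℝ)) (Set.mem_univ (1:ℝ))
    zero_lt_one hφd
  have : slope φ 0 1 = c y - c x := by
    rw [slope_def_field]
    simp [hφdef]
  linarith [h01, this.le, this.ge]

lemma convex_pgrad_le {c : Strat n → ℝ} (hc : ContDiff ℝ 1 c)
    (hconv : ConvexOn ℝ Set.univ c) (x y : Strat n) :
    ∑ ν, inner (𝕜 := ℝ) (pgrad ν c x) (y ν - x ν) ≤ c y - c x := by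
  have hdiff := (hc.differentiable one_ne_zero x)
  have h1 : ∑ ν, inner (𝕜 := ℝ) (pgrad ν c x) (y ν - x ν)
      = fderiv ℝ c x (y - x) := by
    have h2 : ∑ ν, inner (𝕜 := ℝ) (pgrad ν c x) (y ν - x ν)
        = ∑ ν, fderiv ℝ c x ((Pi.single ν (y ν - x ν)) : Strat n) :=
      Finset.sum_congr rfl fun ν _ => pgrad_inner hdiff ν _
    rw [h2, ← map_sum]
    congr 1
    exact Finset.univ_sum_single (y - x)
  rw [h1]
  exact fderiv_le_sub_of_convex hc hconv x y

end Aux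

lemma conic_caratheodory {ι E : Type*} [DecidableEq ι] [AddCommGroup E] [Module ℝ E]
    (v : ι → E) (I : Finset ι) :
    ∀ c : ι → ℝ, (∀ j, 0 ≤ c j) →
    ∃ J ⊆ I, ∃ d : ι → ℝ, (∀ j, 0 ≤ d j) ∧ (∀ j ∉ J, d j = 0) ∧
      (∑ j ∈ J, d j • v j = ∑ j ∈ I, c j • v j) ∧ ¬ LinDep J v := by
  classical
  induction I using Finset.strongInductionOn with
  | _ I IH =>
  intro c hc
  by_cases hdep : LinDep I v
  · obtain ⟨a, ⟨j₁, hj₁, ha₁⟩, hsum⟩ := hdep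
    have key : ∀ a : ι → ℝ, (∑ j ∈ I, a j • v j = 0) → (∃ j ∈ I, 0 < a j) →
        ∃ J ⊆ I, ∃ d : ι → ℝ, (∀ j, 0 ≤ d j) ∧ (∀ j ∉ J, d j = 0) ∧
          (∑ j ∈ J, d j • v j = ∑ j ∈ I, c j • v j) ∧ ¬ LinDep J v := by
      intro a hsum hpos
      set T : Finset ι := I.filter (fun j => 0 < a j) with hT
      have hTne : T.Nonempty := by
        obtain ⟨j, hj, hja⟩ := hpos
        exact ⟨j, Finset.mem_filter.2 ⟨hj, hja⟩⟩
      obtain ⟨j₀, hj₀T, hj₀eq⟩ := Finset.exists_mem_eq_inf' hTne (fun j => c j / a j)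
      set t : ℝ := T.inf' hTne (fun j => c j / a j) with htdef
      have hj₀I : j₀ ∈ I := (Finset.mem_filter.1 hj₀T).1
      have hj₀a : 0 < a j₀ := (Finset.mem_filter.1 hj₀T).2
      have ht0 : 0 ≤ t := by
        rw [htdef]
        apply Finset.le_inf'
        intro j hj
        exact div_nonneg (hc j) (le_of_lt (Finset.mem_filter.1 hj).2)
      set c'' : ι → ℝ := fun j => if j ∈ I then c j - t * a j else 0 with hc''
      have hc''nonneg : ∀ j, 0 ≤ c'' j := by
        intro j
        rw [hc'']
        by_cases hj : j ∈ I
        · simp only [hj, if_true]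
          rcases le_or_gt (a j) 0 with hja | hja
          · nlinarith [hc j]
          · have : t ≤ c j / a j := by
              rw [htdef]
              exact Finset.inf'_le _ (Finset.mem_filter.2 ⟨hj, hja⟩)
            rw [sub_nonneg]
            calc t * a j ≤ (c j / a j) * a j := by nlinarith
            _ = c j := by field_simp
        · simp [hj]
      have hc''j₀ : c'' j₀ = 0 := by
        rw [hc'']
        simp only [hj₀I, if_true]
        rw [hj₀eq]
        field_simp
        ring
      have hsub : I.erase j₀ ⊂ I := Finset.erase_ssubset hj₀I
      obtain ⟨J, hJ, d, hd0, hdsupp, hdsum, hdind⟩ := IH (I.erase j₀) hsub c'' hc''nonneg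
      refine ⟨J, hJ.trans (Finset.erase_subset _ _), d, hd0, hdsupp, ?_, hdind⟩
      rw [hdsum]
      have h1 : ∑ j ∈ I.erase j₀, c'' j • v j = ∑ j ∈ I, c'' j • v j :=
        Finset.sum_erase _ (by rw [hc''j₀, zero_smul])
      rw [h1]
      have h2 : ∑ j ∈ I, c'' j • v j = ∑ j ∈ I, c j • v j - t • ∑ j ∈ I, a j • v j := by
        rw [Finset.smul_sum, ← Finset.sum_sub_distrib]
        apply Finset.sum_congr rfl
        intro j hj
        rw [hc'']
        simp only [hj, if_true]
        rw [sub_smul, smul_smul]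
      rw [h2, hsum, smul_zero, sub_zero]
    rcases lt_trichotomy (a j₁) 0 with hneg | hzero | hpos
    · exact key (fun j => -a j) (by simpa [neg_smul] using congrArg Neg.neg hsum)
        ⟨j₁, hj₁, by simpa using neg_pos.mpr hneg⟩
    · exact absurd hzero ha₁
    · exact key a hsum ⟨j₁, hj₁, hpos⟩
  · refine ⟨I, le_refl I, fun j => if j ∈ I then c j else 0, ?_, ?_, ?_, hdep⟩
    · intro j; by_cases hj : j ∈ I <;> simp [hj, hc j]
    · intro j hj; simp [hj]
    · apply Finset.sum_congr rfl; intro j hj; simp [hj]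

lemma cpld_limit {E Y ι : Type*} [NormedAddCommGroup E] [NormedSpace ℝ E]
    [TopologicalSpace Y] [Fintype ι] [DecidableEq ι]
    (G : ι → Y → E) (ybar : Y) (y : ℕ → Y) (hy : Tendsto y atTop (𝓝 ybar))
    (hGt : ∀ j, Tendsto (fun k => G j (y k)) atTop (𝓝 (G j ybar)))
    (A : Finset ι) (s : ℕ → ι → ℝ) (hs : ∀ k j, 0 ≤ s k j)
    (w : E) (hv : Tendsto (fun k => ∑ j ∈ A, s k j • G j (y k)) atTop (𝓝 w))
    (hcpld : ∀ I ⊆ A, PosLinDep I (fun j => G j ybar) →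
      ∃ U ∈ 𝓝 ybar, ∀ z ∈ U, LinDep I (fun j => G j z)) :
    ∃ t : ι → ℝ, (∀ j, 0 ≤ t j) ∧ (∀ j ∉ A, t j = 0) ∧ w = ∑ j ∈ A, t j • G j ybar := by
  classical
  choose J hJsub d hd0 hdsupp hdsum hdind using
    fun k => conic_caratheodory (fun j => G j (y k)) A (s k) (hs k)
  obtain ⟨J₀, hJ₀⟩ : ∃ J₀ : Finset ι, ∃ᶠ k in atTop, J k = J₀ := by
    by_contra hcon
    push_neg at hcon
    have : ∀ᶠ k in atTop, ∀ J₀ : Finset ι, ¬ J k = J₀ := eventually_all.2 hcon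
    obtain ⟨k, hk⟩ := this.exists
    exact hk (J k) rfl
  obtain ⟨φ, hφmono, hφJ⟩ := Filter.extraction_of_frequently_atTop hJ₀
  have hφat : Tendsto φ atTop atTop := hφmono.tendsto_atTop
  have hJ₀A : J₀ ⊆ A := hφJ 0 ▸ hJsub (φ 0)
  set S : ℕ → ℝ := fun t => ∑ j ∈ J₀, d (φ t) j with hSdef
  have hdle : ∀ t j, d (φ t) j ≤ S t := by
    intro t j
    by_cases hj : j ∈ J₀
    · exact Finset.single_le_sum (fun i _ => hd0 (φ t) i) hj
    · rw [hdsupp (φ t) j (hφJ t ▸ hj)]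
      exact Finset.sum_nonneg fun i _ => hd0 (φ t) i
  by_cases hbdd : ∃ C, ∃ᶠ t in atTop, S t ≤ C
  · obtain ⟨C, hC⟩ := hbdd
    obtain ⟨φ₂, hφ₂mono, hφ₂⟩ := Filter.extraction_of_frequently_atTop hC
    set C' : ℝ := max C 0 with hC'
    have hmem : ∀ t, (fun j => d (φ (φ₂ t)) j) ∈ Set.Icc (0 : ι → ℝ) (fun _ => C') := by
      intro t
      constructor
      · intro j; exact hd0 _ j
      · intro j
        calc d (φ (φ₂ t)) j ≤ S (φ₂ t) := hdle _ j
        _ ≤ C := hφ₂ t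
        _ ≤ C' := le_max_left _ _
    obtain ⟨dbar, hdbarmem, φ₃, hφ₃mono, hφ₃t⟩ :=
      (isCompact_Icc (a := (0 : ι → ℝ)) (b := fun _ => C')).tendsto_subseq hmem
    set ρ : ℕ → ℕ := fun t => φ (φ₂ (φ₃ t)) with hρ
    have hρat : Tendsto ρ atTop atTop :=
      hφat.comp ((hφ₂mono.tendsto_atTop).comp hφ₃mono.tendsto_atTop)
    have hcoord : ∀ j, Tendsto (fun t => d (ρ t) j) atTop (𝓝 (dbar j)) := by
      intro j
      exact (continuous_apply j).continuousAt.tendsto.comp hφ₃t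
    have L1 : Tendsto (fun t => ∑ j ∈ J₀, d (ρ t) j • G j (y (ρ t))) atTop
        (𝓝 (∑ j ∈ J₀, dbar j • G j ybar)) := by
      apply tendsto_finset_sum
      intro j _
      exact (hcoord j).smul ((hGt j).comp hρat)
    have L2 : Tendsto (fun t => ∑ j ∈ J₀, d (ρ t) j • G j (y (ρ t))) atTop (𝓝 w) := by
      have : (fun t => ∑ j ∈ J₀, d (ρ t) j • G j (y (ρ t)))
          = fun t => ∑ j ∈ A, s (ρ t) j • G j (y (ρ t)) := by
        funext t
        rw [← hdsum (ρ t)]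
        congr 1
        exact (hφJ (φ₂ (φ₃ t))).symm
      rw [this]
      exact hv.comp hρat
    have hwe : w = ∑ j ∈ J₀, dbar j • G j ybar := tendsto_nhds_unique L2 L1
    refine ⟨fun j => if j ∈ J₀ then dbar j else 0, ?_, ?_, ?_⟩
    · intro j
      by_cases hj : j ∈ J₀ <;> simp [hj]
      exact hdbarmem.1 j
    · intro j hj
      have hjJ : j ∉ J₀ := fun hjJ => hj (hJ₀A hjJ)
      simp [hjJ]
    · rw [hwe, ← Finset.sum_subset hJ₀A (fun j _ hj => by simp [hj])]
      exact Finset.sum_congr rfl fun j hj => by simp [hj]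
  · exfalso
    push_neg at hbdd
    have hSat : Tendsto S atTop atTop := by
      rw [tendsto_atTop]
      intro C
      exact (hbdd C).mono fun t h => h.le
    obtain ⟨φ₂, hφ₂mono, hφ₂⟩ := Filter.extraction_of_frequently_atTop
      ((hSat.eventually_ge_atTop 1).frequently)
    have hmem : ∀ t, (fun j => d (φ (φ₂ t)) j / S (φ₂ t)) ∈
        Set.Icc (0 : ι → ℝ) (fun _ => 1) := by
      intro t
      have hS1 : (1:ℝ) ≤ S (φ₂ t) := hφ₂ t
      constructor
      · intro j; exact div_nonneg (hd0 _ j) (by linarith)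
      · intro j
        rw [div_le_one (by linarith)]
        calc d (φ (φ₂ t)) j ≤ S (φ₂ t) := hdle _ j
        _ ≤ 1 * S (φ₂ t) := by linarith
        _ = S (φ₂ t) := one_mul _
    obtain ⟨ebar, hebarmem, φ₃, hφ₃mono, hφ₃t⟩ :=
      (isCompact_Icc (a := (0 : ι → ℝ)) (b := fun _ => 1)).tendsto_subseq hmem
    set ρ : ℕ → ℕ := fun t => φ (φ₂ (φ₃ t)) with hρ
    set σ : ℕ → ℕ := fun t => φ₂ (φ₃ t) with hσ
    have hσat : Tendsto σ atTop atTop :=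
      (hφ₂mono.tendsto_atTop).comp hφ₃mono.tendsto_atTop
    have hρat : Tendsto ρ atTop atTop := hφat.comp hσat
    have hcoord : ∀ j, Tendsto (fun t => d (ρ t) j / S (σ t)) atTop (𝓝 (ebar j)) := by
      intro j
      exact (continuous_apply j).continuousAt.tendsto.comp hφ₃t
    have hSpos : ∀ t, (0:ℝ) < S (σ t) := fun t => lt_of_lt_of_le one_pos (hφ₂ (φ₃ t))
    have hSinv : Tendsto (fun t => (S (σ t))⁻¹) atTop (𝓝 0) :=
      tendsto_inv_atTop_zero.comp (hSat.comp hσat)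
    have hsum1 : ∑ j ∈ J₀, ebar j = 1 := by
      have l1 : Tendsto (fun t => ∑ j ∈ J₀, d (ρ t) j / S (σ t)) atTop
          (𝓝 (∑ j ∈ J₀, ebar j)) := tendsto_finset_sum _ fun j _ => hcoord j
      have l2 : (fun t => ∑ j ∈ J₀, d (ρ t) j / S (σ t)) = fun t => (1:ℝ) := by
        funext t
        rw [← Finset.sum_div]
        exact div_self (ne_of_gt (hSpos t))
      rw [l2] at l1
      exact (tendsto_nhds_unique tendsto_const_nhds l1).symm
    have hzero : ∑ j ∈ J₀, ebar j • G j ybar = 0 := by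
      have l1 : Tendsto (fun t => ∑ j ∈ J₀, (d (ρ t) j / S (σ t)) • G j (y (ρ t))) atTop
          (𝓝 (∑ j ∈ J₀, ebar j • G j ybar)) :=
        tendsto_finset_sum _ fun j _ => (hcoord j).smul ((hGt j).comp hρat)
      have l2 : (fun t => ∑ j ∈ J₀, (d (ρ t) j / S (σ t)) • G j (y (ρ t)))
          = fun t => (S (σ t))⁻¹ • ∑ j ∈ A, s (ρ t) j • G j (y (ρ t)) := by
        funext t
        rw [← hdsum (ρ t), Finset.smul_sum]
        have hJeq : J (ρ t) = J₀ := hφJ (φ₂ (φ₃ t))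
        rw [hJeq]
        apply Finset.sum_congr rfl
        intro j _
        rw [smul_smul, div_eq_inv_mul]
      have l3 : Tendsto (fun t => (S (σ t))⁻¹ • ∑ j ∈ A, s (ρ t) j • G j (y (ρ t))) atTop
          (𝓝 ((0:ℝ) • w)) := hSinv.smul (hv.comp hρat)
      rw [zero_smul] at l3
      rw [l2] at l1
      exact tendsto_nhds_unique l1 l3
    have hpld : PosLinDep J₀ (fun j => G j ybar) := by
      refine ⟨fun j => if j ∈ J₀ then ebar j else 0, ?_, ?_, ?_⟩
      · intro j; by_cases hj : j ∈ J₀ <;> simp [hj]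
        exact hebarmem.1 j
      · by_contra hcon
        push_neg at hcon
        have : ∑ j ∈ J₀, ebar j = 0 := by
          apply Finset.sum_eq_zero
          intro j hj
          have := hcon j hj
          simpa [hj] using this
        rw [hsum1] at this; exact one_ne_zero this
      · rw [← hzero]
        apply Finset.sum_congr rfl; intro j hj; simp [hj]
    obtain ⟨U, hU, hUdep⟩ := hcpld J₀ hJ₀A hpld
    have : ∀ᶠ t in atTop, y (ρ t) ∈ U := (hy.comp hρat).eventually_mem hU
    obtain ⟨t, ht⟩ := this.exists
    have hdep := hUdep _ ht
    have hJeq : J (ρ t) = J₀ := hφJ (φ₂ (φ₃ t))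
    exact hdind (ρ t) (hJeq ▸ hdep)

lemma comp_le_sqrt_sum {q : ℕ} (f : Fin q → ℝ) (i : Fin q) :
    |f i| ≤ Real.sqrt (∑ j, f j ^ 2) := by
  rw [← Real.sqrt_sq_eq_abs]
  apply Real.sqrt_le_sqrt
  exact Finset.single_le_sum (fun j _ => sq_nonneg (f j)) (Finset.mem_univ i)

lemma geom_decay {r : ℕ → ℝ} {τ : ℝ} (h0 : ∀ k, 0 ≤ r k) (hτ0 : 0 ≤ τ) (hτ1 : τ < 1)
    (K : ℕ) (hdec : ∀ k, K ≤ k → r (k + 1) ≤ τ * r k) : Tendsto r atTop (𝓝 0) := by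
  have key : ∀ j, r (K + j) ≤ τ ^ j * r K := by
    intro j
    induction j with
    | zero => simp
    | succ j ih =>
      have := hdec (K + j) (Nat.le_add_right _ _)
      calc r (K + (j + 1)) = r ((K + j) + 1) := by ring_nf
      _ ≤ τ * r (K + j) := this
      _ ≤ τ * (τ ^ j * r K) := by nlinarith [h0 (K + j)]
      _ = τ ^ (j + 1) * r K := by ring
  have l1 : Tendsto (fun j => τ ^ j * r K) atTop (𝓝 0) := by
    have := (tendsto_pow_atTop_nhds_zero_of_lt_one hτ0 hτ1).mul_const (r K)
    simpa using this
  have l2 : Tendsto (fun j => r (K + j)) atTop (𝓝 0) :=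
    squeeze_zero (fun j => h0 _) key l1
  have l3 : (fun j => r (K + j)) = fun j => r (j + K) := funext fun j => by rw [Nat.add_comm]
  rw [l3] at l2
  exact (tendsto_add_atTop_iff_nat K).mp l2

lemma rho_tendsto_atTop {rho : ℕ → ℝ} {γ : ℝ} (hγ : 1 < γ) (hpos : ∀ k, 0 < rho k)
    (hmono : Monotone rho) (hinf : ∀ K, ∃ k, K ≤ k ∧ rho (k + 1) = γ * rho k) :
    Tendsto rho atTop atTop := by
  have step : ∀ j : ℕ, ∃ K, rho 0 * γ ^ j ≤ rho K := by
    intro j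
    induction j with
    | zero => exact ⟨0, by simp⟩
    | succ j ih =>
      obtain ⟨K, hK⟩ := ih
      obtain ⟨k, hkK, hkeq⟩ := hinf K
      refine ⟨k + 1, ?_⟩
      rw [hkeq]
      have h1 : rho K ≤ rho k := hmono hkK
      have := hpos K
      calc rho 0 * γ ^ (j + 1) = γ * (rho 0 * γ ^ j) := by ring
      _ ≤ γ * rho K := by nlinarith [mul_pos (hpos 0) (pow_pos (lt_trans one_pos hγ) j)]
      _ ≤ γ * rho k := by nlinarith
  rw [tendsto_atTop]
  intro C
  have hpow : Tendsto (fun j => rho 0 * γ ^ j) atTop atTop :=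
    (tendsto_pow_atTop_atTop_of_one_lt hγ).const_mul_atTop (hpos 0)
  obtain ⟨j, hj⟩ := (hpow.eventually_ge_atTop C).exists
  obtain ⟨K, hK⟩ := step j
  filter_upwards [eventually_ge_atTop K] with k hk
  exact le_trans hj (le_trans hK (hmono hk))

lemma max_mul_self (a : ℝ) : max a 0 * a = max a 0 ^ 2 := by
  rcases le_or_gt a 0 with ha | ha
  · simp [max_eq_right ha]
  · rw [max_eq_left ha.le]; ring

lemma max_div_pos {A R : ℝ} (hR : 0 < R) : max A 0 / R = max (A / R) 0 := by
  rcases le_or_gt A 0 with h | h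
  · rw [max_eq_right h, zero_div, max_eq_right (div_nonpos_of_nonpos_of_nonneg h hR.le)]
  · rw [max_eq_left h.le, max_eq_left (div_nonneg h.le hR.le)]

set_option maxHeartbeats 2000000 in
/-- **Theorem 5.2.** For the variational-equilibrium augmented Lagrangian
method applied to a jointly-convex GNEP, if `h` satisfies the classical CPLD at a limit point
`xbar`, then `xbar` globally minimizes `‖g₊‖²` over `{h ≤ 0}`; in particular, if feasible
points exist, `xbar` is feasible. -/
theorem stmt17 {N : ℕ} {n : Fin N → ℕ} {m p : ℕ}
    (θ : Fin N → Strat n → ℝ)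
    (g : Fin m → Strat n → ℝ)
    (h : Fin p → Strat n → ℝ)
    (hθ : ∀ ν, ContDiff ℝ 1 (θ ν))
    (hgC1 : ∀ i, ContDiff ℝ 1 (g i))
    (hgconv : ∀ i, ConvexOn ℝ Set.univ (g i))
    (hhC1 : ∀ j, ContDiff ℝ 1 (h j))
    (hhconv : ∀ j, ConvexOn ℝ Set.univ (h j))
    (x : ℕ → Strat n)
    (lam : ℕ → Fin m → ℝ)
    (mu : ℕ → Fin p → ℝ)
    (u : ℕ → Fin m → ℝ)
    (rho : ℕ → ℝ)
    (umax τ γ : ℝ)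
    (humax : 0 ≤ umax)
    (hτ : τ ∈ Set.Ioo (0:ℝ) 1)
    (hγ : 1 < γ)
    (hrho0 : 0 < rho 0)
    (hu0 : ∀ i, u 0 i ∈ Set.Icc 0 umax)
    (hlam : ∀ k i, lam (k+1) i = max (u k i + rho k * g i (x (k+1))) 0)
    (hu : ∀ k i, u (k+1) i = min (lam (k+1) i) umax)
    (hrho : ∀ k,
      (Real.sqrt (∑ i, (min (-(g i (x (k+1)))) (lam (k+1) i)) ^ 2) ≤
          τ * Real.sqrt (∑ i, (min (-(g i (x k))) (lam k i)) ^ 2) →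
        rho (k+1) = rho k) ∧
      (¬ (Real.sqrt (∑ i, (min (-(g i (x (k+1)))) (lam (k+1) i)) ^ 2) ≤
          τ * Real.sqrt (∑ i, (min (-(g i (x k))) (lam k i)) ^ 2)) →
        rho (k+1) = γ * rho k))
    (eps eps' : ℕ → ℝ)
    (heps0 : ∀ k, 0 ≤ eps k)
    (heps'0 : ∀ k, 0 ≤ eps' k)
    (heps' : Tendsto eps' atTop (𝓝 0))
    (hA1 : ∀ k ν, ‖pgrad ν (θ ν) (x (k+1))
        + ∑ i, max (u k i + rho k * g i (x (k+1))) 0 • pgrad ν (g i) (x (k+1))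
        + ∑ j, mu (k+1) j • pgrad ν (h j) (x (k+1))‖ ≤ eps k)
    (hA2 : ∀ k, Real.sqrt (∑ j, (min (-(h j (x (k+1)))) (mu (k+1) j)) ^ 2) ≤ eps' k)
    (hepsbd : ∃ M, ∀ k, eps k ≤ M)
    (xbar : Strat n)
    (hclus : MapClusterPt xbar atTop x)
    (hCPLD : ∀ I : Finset (Fin p), (∀ j ∈ I, h j xbar = 0) →
      PosLinDep I (fun j => (fun ν => pgrad ν (h j) xbar : Strat n)) →
      ∃ U ∈ 𝓝 xbar, ∀ y ∈ U, LinDep I (fun j => (fun ν => pgrad ν (h j) y : Strat n))) :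
    ((∀ j, h j xbar ≤ 0) ∧
      ∀ y : Strat n, (∀ j, h j y ≤ 0) →
        ∑ i, max (g i xbar) 0 ^ 2 ≤ ∑ i, max (g i y) 0 ^ 2) ∧
    ((∃ z : Strat n, (∀ i, g i z ≤ 0) ∧ ∀ j, h j z ≤ 0) → ∀ i, g i xbar ≤ 0) := by
  classical
  obtain ⟨M, hM⟩ := hepsbd
  -- extract a subsequence converging to xbar, shifted by one
  obtain ⟨φ, hφmono, hφt⟩ := TopologicalSpace.FirstCountableTopology.tendsto_subseq hclus
  set ψ : ℕ → ℕ := fun t => φ (t + 1) - 1 with hψdef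
  have hψ1 : ∀ t, ψ t + 1 = φ (t + 1) := by
    intro t
    have := hφmono.le_apply (x := t + 1)
    simp only [hψdef]
    omega
  have hψat : Tendsto ψ atTop atTop := by
    apply tendsto_atTop_mono (fun t => ?_) tendsto_id
    have := hφmono.le_apply (x := t + 1)
    simp only [hψdef, id]
    omega
  set y : ℕ → Strat n := fun t => x (ψ t + 1) with hydef
  have hyt : Tendsto y atTop (𝓝 xbar) := by
    have hcomp : y = (x ∘ φ) ∘ (fun t => t + 1) := by
      funext t
      simp only [hydef, Function.comp_apply, hψ1 t]
    rw [hcomp]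
    exact hφt.comp (tendsto_add_atTop_nat 1)
  -- basic facts
  have hlamnn : ∀ k i, 0 ≤ lam (k + 1) i := fun k i => by
    rw [hlam]; exact le_max_right _ _
  have hρpos : ∀ k, 0 < rho k := by
    intro k
    induction k with
    | zero => exact hrho0
    | succ k ih =>
      by_cases hc : Real.sqrt (∑ i, (min (-(g i (x (k+1)))) (lam (k+1) i)) ^ 2) ≤
          τ * Real.sqrt (∑ i, (min (-(g i (x k))) (lam k i)) ^ 2)
      · rw [(hrho k).1 hc]; exact ih
      · rw [(hrho k).2 hc]; exact mul_pos (lt_trans one_pos hγ) ih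
  have hρmono : Monotone rho := by
    apply monotone_nat_of_le_succ
    intro k
    by_cases hc : Real.sqrt (∑ i, (min (-(g i (x (k+1)))) (lam (k+1) i)) ^ 2) ≤
        τ * Real.sqrt (∑ i, (min (-(g i (x k))) (lam k i)) ^ 2)
    · rw [(hrho k).1 hc]
    · rw [(hrho k).2 hc]; nlinarith [hρpos k]
  have hA2c : ∀ k j, |min (-(h j (x (k+1)))) (mu (k+1) j)| ≤ eps' k := fun k j =>
    le_trans (comp_le_sqrt_sum (fun j => min (-(h j (x (k+1)))) (mu (k+1) j)) j) (hA2 k)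
  have hmuge : ∀ k j, -(eps' k) ≤ mu (k + 1) j := by
    intro k j
    have h1 := (abs_le.1 (hA2c k j)).1
    have h2 : min (-(h j (x (k+1)))) (mu (k+1) j) ≤ mu (k+1) j := min_le_right _ _
    linarith
  have heψ : Tendsto (fun t => eps' (ψ t)) atTop (𝓝 0) := heps'.comp hψat
  -- feasibility of xbar w.r.t. h
  have hfeas : ∀ j, h j xbar ≤ 0 := by
    intro j
    by_contra hcon
    push_neg at hcon
    have hh : Tendsto (fun t => h j (y t)) atTop (𝓝 (h j xbar)) :=
      ((hhC1 j).continuous.tendsto xbar).comp hyt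
    have ev1 : ∀ᶠ t in atTop, h j xbar / 2 < h j (y t) :=
      hh.eventually_const_lt (by linarith)
    have ev2 : ∀ᶠ t in atTop, eps' (ψ t) < h j xbar / 2 :=
      heψ.eventually_lt_const (by linarith)
    obtain ⟨t, h1, h2⟩ := (ev1.and ev2).exists
    have h3 := (abs_le.1 (hA2c (ψ t) j)).1
    have h4 : min (-(h j (x (ψ t + 1)))) (mu (ψ t + 1) j) ≤ -(h j (y t)) := min_le_left _ _
    linarith
  -- the main minimality claim
  have hmin : ∀ y' : Strat n, (∀ j, h j y' ≤ 0) →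
      ∑ i, max (g i xbar) 0 ^ 2 ≤ ∑ i, max (g i y') 0 ^ 2 := by
    intro y' hy'
    by_cases hcase : ∀ᶠ k in atTop,
        Real.sqrt (∑ i, (min (-(g i (x (k+1)))) (lam (k+1) i)) ^ 2) ≤
          τ * Real.sqrt (∑ i, (min (-(g i (x k))) (lam k i)) ^ 2)
    · -- Case A: the residual tends to zero, so xbar is feasible for g as well
      set r : ℕ → ℝ := fun k => Real.sqrt (∑ i, (min (-(g i (x k))) (lam k i)) ^ 2) with hrdef
      obtain ⟨K, hK⟩ := eventually_atTop.1 hcase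
      have hr0 : ∀ k, 0 ≤ r k := fun k => Real.sqrt_nonneg _
      have hrt : Tendsto r atTop (𝓝 0) :=
        geom_decay hr0 hτ.1.le hτ.2 K (fun k hk => hK k hk)
      have hgfeas : ∀ i, g i xbar ≤ 0 := by
        intro i
        by_contra hcon
        push_neg at hcon
        have hgc : Tendsto (fun t => g i (y t)) atTop (𝓝 (g i xbar)) :=
          ((hgC1 i).continuous.tendsto xbar).comp hyt
        have hr2 : Tendsto (fun t => r (ψ t + 1)) atTop (𝓝 0) :=
          hrt.comp (tendsto_atTop_mono (fun t => Nat.le_succ (ψ t)) hψat)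
        have ev1 : ∀ᶠ t in atTop, g i xbar / 2 < g i (y t) :=
          hgc.eventually_const_lt (by linarith)
        have ev2 : ∀ᶠ t in atTop, r (ψ t + 1) < g i xbar / 2 :=
          hr2.eventually_lt_const (by linarith)
        obtain ⟨t, h1, h2⟩ := (ev1.and ev2).exists
        have h3 : |min (-(g i (x (ψ t + 1)))) (lam (ψ t + 1) i)| ≤ r (ψ t + 1) :=
          comp_le_sqrt_sum (fun i => min (-(g i (x (ψ t + 1)))) (lam (ψ t + 1) i)) i
        have h4 : min (-(g i (x (ψ t + 1)))) (lam (ψ t + 1) i) ≤ -(g i (y t)) := min_le_left _ _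
        have h5 := (abs_le.1 h3).1
        linarith
      have hz : ∀ i, max (g i xbar) 0 = 0 := fun i => max_eq_right (hgfeas i)
      calc ∑ i, max (g i xbar) 0 ^ 2 = 0 := by simp [hz]
      _ ≤ ∑ i, max (g i y') 0 ^ 2 := Finset.sum_nonneg fun i _ => by positivity
    · -- Case B: rho tends to infinity
      have hinf : ∀ K, ∃ k, K ≤ k ∧ rho (k + 1) = γ * rho k := by
        intro K
        rw [Filter.not_eventually] at hcase
        obtain ⟨k, hk1, hk2⟩ := (hcase.and_eventually (eventually_ge_atTop K)).exists
        exact ⟨k, hk2, (hrho k).2 hk1⟩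
      have htop : Tendsto rho atTop atTop := rho_tendsto_atTop hγ hρpos hρmono hinf
      set R : ℕ → ℝ := fun t => rho (ψ t) with hRdef
      have hRpos : ∀ t, 0 < R t := fun t => hρpos (ψ t)
      have hRat : Tendsto R atTop atTop := htop.comp hψat
      have hRinv : Tendsto (fun t => (R t)⁻¹) atTop (𝓝 0) :=
        tendsto_inv_atTop_zero.comp hRat
      have hRlb : ∀ t, rho 0 ≤ R t := fun t => hρmono (Nat.zero_le (ψ t))
      set A : Finset (Fin p) := Finset.univ.filter (fun j => h j xbar = 0) with hAdef
      set G : Fin p → Strat n → Strat n := fun j z => fun ν => pgrad ν (h j) z with hGdef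
      set Gg : Fin m → Strat n → Strat n := fun i z => fun ν => pgrad ν (g i) z with hGgdef
      have hGt : ∀ j, Tendsto (fun t => G j (y t)) atTop (𝓝 (G j xbar)) := by
        intro j
        have hc : Continuous (G j) := continuous_pi fun ν => pgrad_continuous (hhC1 j) ν
        exact (hc.tendsto xbar).comp hyt
      have hGgt : ∀ i, Tendsto (fun t => Gg i (y t)) atTop (𝓝 (Gg i xbar)) := by
        intro i
        have hc : Continuous (Gg i) := continuous_pi fun ν => pgrad_continuous (hgC1 i) ν
        exact (hc.tendsto xbar).comp hyt
      set abar : Fin m → ℝ := fun i => max (g i xbar) 0 with habardef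
      set a : ℕ → Fin m → ℝ := fun t i => lam (ψ t + 1) i / R t with hadef
      set tc : ℕ → Fin p → ℝ := fun t j => mu (ψ t + 1) j / R t with htcdef
      -- a converges to abar
      have haeq : ∀ t i, a t i = max (u (ψ t) i / R t + g i (y t)) 0 := by
        intro t i
        show lam (ψ t + 1) i / R t = max (u (ψ t) i / R t + g i (y t)) 0
        have hR : R t = rho (ψ t) := rfl
        have hy : y t = x (ψ t + 1) := rfl
        rw [hR, hy, hlam (ψ t) i, max_div_pos (hρpos (ψ t)), add_div,
          mul_div_cancel_left₀ _ (ne_of_gt (hρpos (ψ t)))]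
      have hudiv : ∀ i, Tendsto (fun t => u (ψ t) i / R t) atTop (𝓝 0) := by
        intro i
        have hub : ∀ k i, 0 ≤ u k i ∧ u k i ≤ umax := by
          intro k
          induction k with
          | zero => exact fun i => ⟨(hu0 i).1, (hu0 i).2⟩
          | succ k ih =>
            intro i
            rw [hu]
            exact ⟨le_min (hlamnn k i) humax, min_le_right _ _⟩
        have hb : Tendsto (fun t => umax * (R t)⁻¹) atTop (𝓝 0) := by
          have := hRinv.const_mul umax
          simpa using this
        apply squeeze_zero (fun t => div_nonneg (hub (ψ t) i).1 (hRpos t).le) (fun t => ?_) hb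
        rw [div_eq_mul_inv]
        exact mul_le_mul_of_nonneg_right (hub (ψ t) i).2 (inv_nonneg.2 (hRpos t).le)
      have ha : ∀ i, Tendsto (fun t => a t i) atTop (𝓝 (abar i)) := by
        intro i
        have hgc : Tendsto (fun t => g i (y t)) atTop (𝓝 (g i xbar)) :=
          ((hgC1 i).continuous.tendsto xbar).comp hyt
        have := ((hudiv i).add hgc).max (tendsto_const_nhds (x := (0:ℝ)))
        rw [zero_add] at this
        have heqf : (fun t => max (u (ψ t) i / R t + g i (y t)) 0) = fun t => a t i :=
          funext fun t => (haeq t i).symm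
        rw [heqf] at this
        exact this
      -- lower bound for tc, and inactive components tend to zero
      set beps : ℕ → ℝ := fun t => eps' (ψ t) / rho 0 with hbepsdef
      have hbeps0 : ∀ t, 0 ≤ beps t := fun t => div_nonneg (heps'0 _) hrho0.le
      have hbepst : Tendsto beps atTop (𝓝 0) := by
        have := heψ.div_const (rho 0)
        simpa using this
      have htclb : ∀ t j, -(beps t) ≤ tc t j := by
        intro t j
        have h1 : -(eps' (ψ t)) ≤ mu (ψ t + 1) j := hmuge (ψ t) j
        have h2 : -(eps' (ψ t)) / R t ≤ mu (ψ t + 1) j / R t :=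
          (div_le_div_iff_of_pos_right (hRpos t)).2 h1
        have h3 : eps' (ψ t) / R t ≤ eps' (ψ t) / rho 0 :=
          div_le_div_of_nonneg_left (heps'0 _) hrho0 (hRlb t)
        calc -(beps t) = -(eps' (ψ t) / rho 0) := rfl
        _ ≤ -(eps' (ψ t) / R t) := by linarith
        _ = -(eps' (ψ t)) / R t := (neg_div _ _).symm
        _ ≤ tc t j := h2
      have htcub : ∀ t j, tc t j ≤ (mu (ψ t + 1) j) / R t := fun t j => le_refl _
      have htc0 : ∀ j, j ∉ A → Tendsto (fun t => tc t j) atTop (𝓝 0) := by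
        intro j hjA
        have hjne : h j xbar ≠ 0 := by
          intro heq
          exact hjA (Finset.mem_filter.2 ⟨Finset.mem_univ j, heq⟩)
        have hjlt : h j xbar < 0 := lt_of_le_of_ne (hfeas j) hjne
        have hh : Tendsto (fun t => h j (y t)) atTop (𝓝 (h j xbar)) :=
          ((hhC1 j).continuous.tendsto xbar).comp hyt
        have ev1 : ∀ᶠ t in atTop, h j (y t) < h j xbar / 2 :=
          hh.eventually_lt_const (by linarith)
        have ev2 : ∀ᶠ t in atTop, eps' (ψ t) < -(h j xbar) / 2 :=
          heψ.eventually_lt_const (by linarith)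
        have evmu : ∀ᶠ t in atTop, |mu (ψ t + 1) j| ≤ eps' (ψ t) := by
          filter_upwards [ev1, ev2] with t h1 h2
          have h4 : min (-(h j (x (ψ t + 1)))) (mu (ψ t + 1) j) ≤ eps' (ψ t) :=
            (abs_le.1 (hA2c (ψ t) j)).2
          have h5 : mu (ψ t + 1) j ≤ eps' (ψ t) := by
            by_contra hcon5
            push_neg at hcon5
            have h1' : h j (x (ψ t + 1)) < h j xbar / 2 := h1
            have h6 : eps' (ψ t) < -(h j (x (ψ t + 1))) := by linarith
            exact absurd h4 (not_le.2 (lt_min h6 hcon5))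
          exact abs_le.2 ⟨hmuge (ψ t) j, h5⟩
        apply squeeze_zero_norm' ?_ hbepst
        filter_upwards [evmu] with t hmu
        rw [Real.norm_eq_abs]
        have : |tc t j| = |mu (ψ t + 1) j| / R t := by
          rw [htcdef]
          rw [abs_div, abs_of_pos (hRpos t)]
        rw [this]
        calc |mu (ψ t + 1) j| / R t ≤ eps' (ψ t) / R t :=
              (div_le_div_iff_of_pos_right (hRpos t)).2 hmu
        _ ≤ beps t := div_le_div_of_nonneg_left (heps'0 _) hrho0 (hRlb t)
      -- the limit w
      set w : Strat n := - ∑ i, abar i • Gg i xbar with hwdef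
      have hQt : Tendsto (fun t => ∑ j, tc t j • G j (y t)) atTop (𝓝 w) := by
        set P : ℕ → Strat n := fun t => fun ν => pgrad ν (θ ν) (y t) with hPdef
        have hPt : Tendsto P atTop (𝓝 (fun ν => pgrad ν (θ ν) xbar)) := by
          apply tendsto_pi_nhds.2
          intro ν
          have := ((pgrad_continuous (hθ ν) ν).tendsto xbar).comp hyt
          exact this
        set Z : ℕ → Strat n := fun t => (R t)⁻¹ • (fun ν => pgrad ν (θ ν) (y t)
            + ∑ i, max (u (ψ t) i + R t * g i (y t)) 0 • pgrad ν (g i) (y t)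
            + ∑ j, mu (ψ t + 1) j • pgrad ν (h j) (y t)) with hZdef
        have hZ0 : Tendsto Z atTop (𝓝 0) := by
          apply tendsto_pi_nhds.2
          intro ν
          have hbound : ∀ t, ‖Z t ν‖ ≤ (R t)⁻¹ * M := by
            intro t
            have h1 := hA1 (ψ t) ν
            rw [hZdef]
            simp only [Pi.smul_apply]
            rw [norm_smul, Real.norm_eq_abs, abs_of_pos (inv_pos.2 (hRpos t))]
            apply mul_le_mul_of_nonneg_left _ (inv_pos.2 (hRpos t)).le
            exact le_trans h1 (hM (ψ t))
          have hlim : Tendsto (fun t => (R t)⁻¹ * M) atTop (𝓝 0) := by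
            have := hRinv.mul_const M
            simpa using this
          have := squeeze_zero_norm hbound hlim
          simpa using this
        have hZeq : ∀ t, Z t = (R t)⁻¹ • P t + (∑ i, a t i • Gg i (y t))
            + (∑ j, tc t j • G j (y t)) := by
          intro t
          funext ν
          rw [hZdef]
          simp only [Pi.smul_apply, Pi.add_apply, Finset.sum_apply]
          rw [smul_add, smul_add, Finset.smul_sum, Finset.smul_sum]
          congr 1
          · congr 1
            apply Finset.sum_congr rfl
            intro i _
            rw [smul_smul]
            congr 1
            rw [hadef]
            show (R t)⁻¹ * max (u (ψ t) i + R t * g i (y t)) 0 = lam (ψ t + 1) i / R t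
            rw [hlam (ψ t) i]
            rw [inv_mul_eq_div]
          · apply Finset.sum_congr rfl
            intro j _
            rw [smul_smul]
            congr 1
            rw [htcdef]
            exact inv_mul_eq_div _ _
        have hfun : (fun t => ∑ j, tc t j • G j (y t))
            = fun t => Z t - (R t)⁻¹ • P t - ∑ i, a t i • Gg i (y t) := by
          funext t
          rw [hZeq t]
          abel
        rw [hfun]
        have l1 : Tendsto (fun t => (R t)⁻¹ • P t) atTop
            (𝓝 ((0:ℝ) • (fun ν => pgrad ν (θ ν) xbar : Strat n))) := hRinv.smul hPt
        rw [zero_smul] at l1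
        have l2 : Tendsto (fun t => ∑ i, a t i • Gg i (y t)) atTop
            (𝓝 (∑ i, abar i • Gg i xbar)) :=
          tendsto_finset_sum _ fun i _ => (ha i).smul (hGgt i)
        have := (hZ0.sub l1).sub l2
        rw [hwdef]
        simpa using this
      -- the nonnegative coefficients supported on the active set
      set s : ℕ → Fin p → ℝ := fun t j => if j ∈ A then max (tc t j) 0 else 0 with hsdef
      have hs : ∀ t j, 0 ≤ s t j := by
        intro t j
        rw [hsdef]
        by_cases hj : j ∈ A <;> simp [hj, le_max_right]
      have hvA : Tendsto (fun t => ∑ j ∈ A, s t j • G j (y t)) atTop (𝓝 w) := by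
        have hdiff : ∀ j, Tendsto (fun t => s t j - tc t j) atTop (𝓝 0) := by
          intro j
          by_cases hjA : j ∈ A
          · apply squeeze_zero_norm (fun t => ?_) hbepst
            rw [Real.norm_eq_abs, hsdef]
            simp only [hjA, if_true]
            have h1 : tc t j ≤ max (tc t j) 0 := le_max_left _ _
            have h2 : max (tc t j) 0 - tc t j ≤ beps t := by
              rcases le_or_gt (tc t j) 0 with hle | hlt
              · rw [max_eq_right hle]
                have := htclb t j
                linarith
              · rw [max_eq_left hlt.le]
                simpa using hbeps0 t
            rw [abs_of_nonneg (by linarith)]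
            exact h2
          · have := (htc0 j hjA).neg
            rw [neg_zero] at this
            have heqf : (fun t => s t j - tc t j) = fun t => -(tc t j) := by
              funext t
              rw [hsdef]
              simp [hjA]
            rw [heqf]
            exact this
        have hsum_ext : ∀ t, ∑ j ∈ A, s t j • G j (y t)
            = (∑ j, tc t j • G j (y t)) + ∑ j, (s t j - tc t j) • G j (y t) := by
          intro t
          rw [← Finset.sum_add_distrib]
          have h1 : ∀ j, tc t j • G j (y t) + (s t j - tc t j) • G j (y t)
              = s t j • G j (y t) := by
            intro j
            rw [← add_smul]
            congr 1
            ring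
          rw [Finset.sum_congr rfl fun j _ => h1 j]
          apply Finset.sum_subset (Finset.subset_univ A)
          intro j _ hj
          rw [hsdef]
          simp [hj]
        have hE0 : Tendsto (fun t => ∑ j, (s t j - tc t j) • G j (y t)) atTop
            (𝓝 (∑ j : Fin p, (0:ℝ) • G j xbar)) :=
          tendsto_finset_sum _ fun j _ => (hdiff j).smul (hGt j)
        simp only [zero_smul, Finset.sum_const_zero] at hE0
        have := hQt.add hE0
        rw [add_zero] at this
        have heqf : (fun t => ∑ j ∈ A, s t j • G j (y t))
            = fun t => (∑ j, tc t j • G j (y t)) + ∑ j, (s t j - tc t j) • G j (y t) :=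
          funext hsum_ext
        rw [heqf]
        exact this
      -- apply the CPLD limit lemma
      have hcpld' : ∀ I ⊆ A, PosLinDep I (fun j => G j xbar) →
          ∃ U ∈ 𝓝 xbar, ∀ z ∈ U, LinDep I (fun j => G j z) := by
        intro I hIA hpld
        exact hCPLD I (fun j hj => (Finset.mem_filter.1 (hIA hj)).2) hpld
      obtain ⟨tb, htb0, htbsupp, htbw⟩ := cpld_limit G xbar y hyt hGt A s hs w hvA hcpld'
      -- final convexity chain
      have K1 : ∀ j ∈ A, ∑ ν, inner (𝕜 := ℝ) (pgrad ν (h j) xbar) (y' ν - xbar ν) ≤ h j y' := by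
        intro j hj
        have hcv := convex_pgrad_le (hhC1 j) (hhconv j) xbar y'
        have hj0 : h j xbar = 0 := (Finset.mem_filter.1 hj).2
        linarith
      have K2 : ∀ i, ∑ ν, inner (𝕜 := ℝ) (pgrad ν (g i) xbar) (y' ν - xbar ν)
          ≤ g i y' - g i xbar := fun i => convex_pgrad_le (hgC1 i) (hgconv i) xbar y'
      set S1 : ℝ := ∑ ν, inner (𝕜 := ℝ) (w ν) (y' ν - xbar ν) with hS1def
      have hS1a : S1 = ∑ j ∈ A, tb j *
          ∑ ν, inner (𝕜 := ℝ) (pgrad ν (h j) xbar) (y' ν - xbar ν) := by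
        rw [hS1def]
        have hstep : ∀ ν, inner (𝕜 := ℝ) (w ν) (y' ν - xbar ν)
            = ∑ j ∈ A, tb j * inner (𝕜 := ℝ) (pgrad ν (h j) xbar) (y' ν - xbar ν) := by
          intro ν
          rw [htbw]
          rw [Finset.sum_apply]
          rw [sum_inner]
          apply Finset.sum_congr rfl
          intro j _
          rw [Pi.smul_apply, real_inner_smul_left]
        rw [Finset.sum_congr rfl fun ν _ => hstep ν, Finset.sum_comm]
        apply Finset.sum_congr rfl
        intro j _
        rw [Finset.mul_sum]
      have hS1b : S1 = -∑ i, abar i *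
          ∑ ν, inner (𝕜 := ℝ) (pgrad ν (g i) xbar) (y' ν - xbar ν) := by
        rw [hS1def]
        have hstep : ∀ ν, inner (𝕜 := ℝ) (w ν) (y' ν - xbar ν)
            = -∑ i, abar i * inner (𝕜 := ℝ) (pgrad ν (g i) xbar) (y' ν - xbar ν) := by
          intro ν
          rw [hwdef]
          rw [Pi.neg_apply, Finset.sum_apply]
          rw [inner_neg_left, sum_inner]
          congr 1
          apply Finset.sum_congr rfl
          intro i _
          rw [Pi.smul_apply, real_inner_smul_left]
        rw [Finset.sum_congr rfl fun ν _ => hstep ν]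
        rw [Finset.sum_neg_distrib, Finset.sum_comm]
        congr 1
        apply Finset.sum_congr rfl
        intro i _
        rw [Finset.mul_sum]
      have hS1le : S1 ≤ 0 := by
        rw [hS1a]
        apply Finset.sum_nonpos
        intro j hj
        have h1 := K1 j hj
        have h2 := htb0 j
        have h3 : tb j * ∑ ν, inner (𝕜 := ℝ) (pgrad ν (h j) xbar) (y' ν - xbar ν)
            ≤ tb j * h j y' := mul_le_mul_of_nonneg_left h1 h2
        have h4 : tb j * h j y' ≤ 0 := mul_nonpos_of_nonneg_of_nonpos h2 (hy' j)
        linarith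
      have hkey : ∑ i, abar i * g i xbar ≤ ∑ i, abar i * g i y' := by
        have h1 : 0 ≤ ∑ i, abar i *
            ∑ ν, inner (𝕜 := ℝ) (pgrad ν (g i) xbar) (y' ν - xbar ν) := by
          have := hS1b
          linarith [hS1le, this.symm.le, this.le]
        have h2 : ∑ i, abar i * ∑ ν, inner (𝕜 := ℝ) (pgrad ν (g i) xbar) (y' ν - xbar ν)
            ≤ ∑ i, abar i * (g i y' - g i xbar) := by
          apply Finset.sum_le_sum
          intro i _
          exact mul_le_mul_of_nonneg_left (K2 i) (le_max_right _ _)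
        have h3 : ∑ i, abar i * (g i y' - g i xbar)
            = ∑ i, abar i * g i y' - ∑ i, abar i * g i xbar := by
          rw [← Finset.sum_sub_distrib]
          apply Finset.sum_congr rfl
          intro i _
          ring
        linarith
      -- Cauchy-Schwarz finish
      have hα : ∑ i, max (g i xbar) 0 ^ 2 = ∑ i, abar i * g i xbar :=
        Finset.sum_congr rfl fun i _ => (max_mul_self (g i xbar)).symm
      have hstep2 : ∑ i, abar i * g i y' ≤ ∑ i, abar i * max (g i y') 0 :=
        Finset.sum_le_sum fun i _ =>
          mul_le_mul_of_nonneg_left (le_max_left _ _) (le_max_right _ _)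
      set α : ℝ := ∑ i, max (g i xbar) 0 ^ 2 with hαdef
      set β : ℝ := ∑ i, max (g i y') 0 ^ 2 with hβdef
      set Sc : ℝ := ∑ i, abar i * max (g i y') 0 with hScdef
      have hαS : α ≤ Sc := by
        rw [hαdef]
        calc ∑ i, max (g i xbar) 0 ^ 2 = ∑ i, abar i * g i xbar := hα
        _ ≤ ∑ i, abar i * g i y' := hkey
        _ ≤ Sc := hstep2
      have hCS : Sc ^ 2 ≤ α * β := by
        have := Finset.sum_mul_sq_le_sq_mul_sq Finset.univ abar (fun i => max (g i y') 0)
        calc Sc ^ 2 = (∑ i, abar i * max (g i y') 0) ^ 2 := rfl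
        _ ≤ (∑ i, abar i ^ 2) * ∑ i, max (g i y') 0 ^ 2 := this
        _ = α * β := by rw [hαdef, hβdef]
      have hα0 : 0 ≤ α := Finset.sum_nonneg fun i _ => by positivity
      have hβ0 : 0 ≤ β := Finset.sum_nonneg fun i _ => by positivity
      rcases eq_or_lt_of_le hα0 with hz | hpos
      · rw [← hz]; exact hβ0
      · have h1 : α * α ≤ Sc * Sc := mul_self_le_mul_self hα0 hαS
        have h2 : Sc * Sc = Sc ^ 2 := (sq Sc).symm
        have h3 : α * α ≤ α * β := by
          calc α * α ≤ Sc * Sc := h1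
          _ = Sc ^ 2 := h2
          _ ≤ α * β := hCS
        exact le_of_mul_le_mul_left h3 hpos
  refine ⟨⟨hfeas, hmin⟩, ?_⟩
  rintro ⟨z, hzg, hzh⟩ i
  have h1 := hmin z hzh
  have h2 : ∑ i, max (g i z) 0 ^ 2 = 0 := by
    apply Finset.sum_eq_zero
    intro i _
    rw [max_eq_right (hzg i)]
    norm_num
  rw [h2] at h1
  have h3 : ∀ i ∈ Finset.univ, (0:ℝ) ≤ max (g i xbar) 0 ^ 2 := fun i _ => by positivity
  have h4 := (Finset.sum_eq_zero_iff_of_nonneg h3).1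
    (le_antisymm h1 (Finset.sum_nonneg h3)) i (Finset.mem_univ i)
  have h5 : max (g i xbar) 0 = 0 := by
    have := sq_eq_zero_iff.1 h4
    exact this
  exact max_eq_right_iff.1 h5
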